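/- For a pomset r over the communication labels and a word W, W belongs to the prefix closure of L(r) if and only if there exists a prefix pomset r' of r such that W ∈ L(r'). -/

import Mathlib

namespace CPom

/-- Communication labels over participants `P` and messages `M`.
`AB!m` is encoded with `isOut = true`, `AB?m` with `isOut = false`;
channels are ordered pairs of *distinct* participants. -/
structure Label (P M : Type) where
  sndr : P
  rcvr : P
  isOut : Bool
  msg : M
  ne : sndr ≠ rcvr

namespace Label

/-- The subject of `AB!m` is `A` (the sender); the subject of `AB?m` is `B` (the receiver). -/
def subject {P M : Type} (l : Label P M) : P :=
  if l.isOut then l.sndr else l.rcvr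

/-- `Dual l l'` holds when `l = AB!m` and `l' = AB?m` (matching output/input labels). -/
def Dual {P M : Type} (l l' : Label P M) : Prop :=
  l.isOut = true ∧ l'.isOut = false ∧ l.sndr = l'.sndr ∧ l.rcvr = l'.rcvr ∧ l.msg = l'.msg

end Label

/-- A labelled partially ordered set (a representative of a pomset) on event
carrier `E` with labels in `L`: a finite set of events, a partial order on them,
and a labelling function. -/
structure Lposet (E L : Type) where
  events : Finset E
  le : E → E → Prop
  lab : E → L
  le_refl : ∀ e ∈ events, le e e
  le_trans : ∀ a ∈ events, ∀ b ∈ events, ∀ c ∈ events, le a b → le b c → le a c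
  le_antisymm : ∀ a ∈ events, ∀ b ∈ events, le a b → le b a → a = b

variable {P M E F : Type}

/-- `es` enumerates the events of `r` consistently with its order, and `W` is the
corresponding word of labels. -/
def IsLinWith {L : Type} (r : Lposet E L) (es : List E) (W : List L) : Prop :=
  es.Nodup ∧ (∀ e, e ∈ es ↔ e ∈ r.events) ∧
    (∀ i j : Fin es.length, r.le (es.get i) (es.get j) → (i : ℕ) ≤ (j : ℕ)) ∧
    W = es.map r.lab

/-- The language of a pomset: the set of all its linearizations. -/
def lang {L : Type} (r : Lposet E L) : Set (List L) := {W | ∃ es, IsLinWith r es W}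

/-- The language of a set of pomsets. -/
def langSet {L : Type} (R : Set (Lposet E L)) : Set (List L) := ⋃ r ∈ R, lang r

/-- Prefix closure of a language. -/
def prefCl {α : Type} (L : Set (List α)) : Set (List α) := {w | ∃ w' ∈ L, w <+: w'}

open Classical in
/-- Restriction of an lposet to the events satisfying `p`. -/
noncomputable def Lposet.restrict {L : Type} (r : Lposet E L) (p : E → Prop) : Lposet E L where
  events := r.events.filter p
  le := r.le
  lab := r.lab
  le_refl e he := r.le_refl e (Finset.mem_of_mem_filter e he)
  le_trans a ha b hb c hc :=
    r.le_trans a (Finset.mem_of_mem_filter a ha) b (Finset.mem_of_mem_filter b hb)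
      c (Finset.mem_of_mem_filter c hc)
  le_antisymm a ha b hb :=
    r.le_antisymm a (Finset.mem_of_mem_filter a ha) b (Finset.mem_of_mem_filter b hb)

/-- Projection of a pomset on participant `A`: restriction to the events whose
label has subject `A`. -/
noncomputable def projP (r : Lposet E (Label P M)) (A : P) : Lposet E (Label P M) :=
  r.restrict fun e => (r.lab e).subject = A

/-- Projection of a word on participant `A`: keep the letters with subject `A`. -/
def wproj [DecidableEq P] (W : List (Label P M)) (A : P) : List (Label P M) :=
  W.filter fun l => decide (l.subject = A)

/-- `e` is an immediate predecessor of `e'` in `r`. -/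
def ImmPred {L : Type} (r : Lposet E L) (e e' : E) : Prop :=
  e ∈ r.events ∧ e' ∈ r.events ∧ e ≠ e' ∧ r.le e e' ∧
    ∀ e'' ∈ r.events, r.le e e'' → r.le e'' e' → e'' = e ∨ e'' = e'

/-- `e` and `e'` are matching output and input events of `r`. -/
def Matches (r : Lposet E (Label P M)) (e e' : E) : Prop :=
  ImmPred r e e' ∧ Label.Dual (r.lab e) (r.lab e')

/-- Well-formedness of a pomset over communication labels. -/
def WellFormed (r : Lposet E (Label P M)) : Prop :=
  -- (1) an output has at most one matching input (immediate successor with dual label)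
  (∀ e ∈ r.events, (r.lab e).isOut = true →
    ∀ e₁ ∈ r.events, ∀ e₂ ∈ r.events, Matches r e e₁ → Matches r e e₂ → e₁ = e₂) ∧
  -- (2) an input has exactly one matching output (immediate predecessor with dual label)
  (∀ e' ∈ r.events, (r.lab e').isOut = false → ∃! e, e ∈ r.events ∧ Matches r e e') ∧
  -- (3) immediate order between different subjects only via matching pairs
  (∀ e ∈ r.events, ∀ e' ∈ r.events, ImmPred r e e' →
    (r.lab e).subject ≠ (r.lab e').subject → Matches r e e') ∧
  -- (4) equally-labelled ordered outputs cannot have oppositely ordered matching inputs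
  (∀ e ∈ r.events, ∀ e' ∈ r.events, e ≠ e' → r.lab e = r.lab e' → (r.lab e).isOut = true →
    ∀ eb ∈ r.events, ∀ eb' ∈ r.events, Matches r e eb → Matches r e' eb' →
      r.le e e' → ¬ r.le eb' eb)

/-- A pomset is complete when every output event has a matching input event. -/
def CompletePom (r : Lposet E (Label P M)) : Prop :=
  ∀ e ∈ r.events, (r.lab e).isOut = true → ∃ e' ∈ r.events, Matches r e e'

/-- `r ⊑ r'` (`r` is less permissive than `r'`), same carrier:
same events, same labels, and the order of `r` contains the one of `r'`. -/
def LeqPermSame {L : Type} (r r' : Lposet E L) : Prop :=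
  r.events = r'.events ∧ (∀ e ∈ r.events, r.lab e = r'.lab e) ∧
    ∀ a ∈ r.events, ∀ b ∈ r.events, r'.le a b → r.le a b

/-- `r ⊑ r'` up to renaming of events (pomsets are isomorphism classes of lposets):
a label-preserving bijection of the events along which the order of `r'`
is contained in the order of `r`. -/
def LeqPermIso {L : Type} (r : Lposet E L) (r' : Lposet F L) : Prop :=
  ∃ φ : E → F, Set.BijOn φ ↑r.events ↑r'.events ∧
    (∀ e ∈ r.events, r'.lab (φ e) = r.lab e) ∧
    ∀ a ∈ r.events, ∀ b ∈ r.events, r'.le (φ a) (φ b) → r.le a b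

/-- Isomorphism of lposets (representing the same pomset). -/
def IsoPom {L : Type} (r : Lposet E L) (r' : Lposet F L) : Prop :=
  ∃ φ : E → F, Set.BijOn φ ↑r.events ↑r'.events ∧
    (∀ e ∈ r.events, r'.lab (φ e) = r.lab e) ∧
    ∀ a ∈ r.events, ∀ b ∈ r.events, (r.le a b ↔ r'.le (φ a) (φ b))

/-- `r'` is a prefix of `r`: there is a label-preserving injection `φ` of the events
of `r'` into those of `r` with `φ(≤') = ≤ ∩ (E × φ(E'))`. -/
def IsPrefixPom {L : Type} (r' : Lposet F L) (r : Lposet E L) : Prop :=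
  ∃ φ : F → E, Set.InjOn φ ↑r'.events ∧ Set.MapsTo φ ↑r'.events ↑r.events ∧
    (∀ e ∈ r'.events, r.lab (φ e) = r'.lab e) ∧
    ∀ x y : E,
      ((∃ a ∈ r'.events, ∃ b ∈ r'.events, φ a = x ∧ φ b = y ∧ r'.le a b) ↔
        (x ∈ r.events ∧ y ∈ r.events ∧ r.le x y ∧ ∃ b ∈ r'.events, φ b = y))

/-- `W` is `P`-feasible for the language `L`. -/
def Feasible [DecidableEq P] (W : List (Label P M)) (L : Set (List (Label P M))) : Prop :=
  ∀ A : P, ∃ W' ∈ L, wproj W A = wproj W' A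

/-- A word is well-formed (and complete) when it is a linearization of a
well-formed (and complete) pomset. -/
def WFWord (W : List (Label P M)) : Prop :=
  ∃ (F : Type) (rw : Lposet F (Label P M)), WellFormed rw ∧ W ∈ lang rw

def WFCompleteWord (W : List (Label P M)) : Prop :=
  ∃ (F : Type) (rw : Lposet F (Label P M)), WellFormed rw ∧ CompletePom rw ∧ W ∈ lang rw

/-- The action `α` concurrently repeats in `r`. -/
def ConcRepeats {L : Type} (r : Lposet E L) (α : L) : Prop :=
  ∃ e ∈ r.events, ∃ e' ∈ r.events,
    e ≠ e' ∧ r.lab e = α ∧ r.lab e' = α ∧ ¬ r.le e e' ∧ ¬ r.le e' e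

section Closure

variable [Fintype P] [DecidableEq P] [DecidableEq E]

/-- Events of the inter-participant closure: disjoint union of the events of the
components, tagged by the participant. -/
def clEvents (t : P → Lposet E (Label P M)) : Finset (P × E) :=
  Finset.univ.biUnion fun A => (t A).events.image fun e => (A, e)

/-- Labelling of the inter-participant closure. -/
def clLab (t : P → Lposet E (Label P M)) : P × E → Label P M := fun p => (t p.1).lab p.2

/-- The union of the component orders. -/
def compRel (t : P → Lposet E (Label P M)) : P × E → P × E → Prop := fun p q =>
  p.1 = q.1 ∧ p.2 ∈ (t p.1).events ∧ q.2 ∈ (t p.1).events ∧ (t p.1).le p.2 q.2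

/-- `RI` is a legitimate choice of `≤_I`: it relates only pairs of an output event
`AB!m` of the component of `A` with an input event `AB?m` of the component of `B`. -/
def MatchRel (t : P → Lposet E (Label P M)) (RI : P × E → P × E → Prop) : Prop :=
  ∀ p q, RI p q → p ∈ clEvents t ∧ q ∈ clEvents t ∧
    Label.Dual (clLab t p) (clLab t q) ∧ (clLab t p).sndr = p.1 ∧ (clLab t q).rcvr = q.1

/-- The inter-participant closure `□(t)` of a tuple of (already projected) pomsets:
all well-formed pomsets on the disjoint union of the events whose order is generated by
the component orders together with some matching relation `≤_I`. -/
def InterClosure (t : P → Lposet E (Label P M)) : Set (Lposet (P × E) (Label P M)) :=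
  { r | r.events = clEvents t ∧ (∀ p ∈ clEvents t, r.lab p = clLab t p) ∧ WellFormed r ∧
      ∃ RI : P × E → P × E → Prop, MatchRel t RI ∧
        ∀ p ∈ clEvents t, ∀ q ∈ clEvents t,
          (r.le p q ↔ Relation.ReflTransGen (fun x y => RI x y ∨ compRel t x y) p q) }

/-- Closure condition CCP2. -/
def SatCCP2 (R : Set (Lposet E (Label P M))) : Prop :=
  ∀ t : P → Lposet E (Label P M), (∀ A, t A ∈ R) →
    ∀ r ∈ InterClosure (fun A => projP (t A) A), ∃ r' ∈ R, LeqPermIso r r'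

/-- Closure condition CCP3. -/
def SatCCP3 (R : Set (Lposet E (Label P M))) : Prop :=
  ∀ t : P → Lposet E (Label P M), (∀ A, ∃ r ∈ R, IsPrefixPom (t A) r) →
    ∀ rb ∈ InterClosure (fun A => projP (t A) A),
      ∃ r' ∈ R, ∃ rp : Lposet E (Label P M), IsPrefixPom rp r' ∧ LeqPermIso rb rp

end Closure

open Classical in
/-- Number of occurrences of the label `α` on events preceding (or equal to) `e`
in the enumeration `es`. -/
noncomputable def countUpTo {L : Type} (es : List E) (lab : E → L) (α : L) (e : E) : ℕ :=
  ((es.take ((es.findIdx fun x => decide (x = e)) + 1)).map lab).countP fun x => decide (x = α)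

/-- A communicating finite-state machine (the per-participant automaton). -/
structure CFSM (Q P M : Type) where
  init : Q
  acc : Q → Prop
  tr : Q → Label P M → Q → Prop

/-- A communicating system: an `A`-CFSM (finite-state, transitions with subject `A`)
for every participant `A`. -/
structure CSystem (P M : Type) where
  St : P → Type
  fin : ∀ A, Finite (St A)
  mach : ∀ A, CFSM (St A) P M
  subj_ok : ∀ A q l q', (mach A).tr q l q' → l.subject = A

/-- Configurations: a local state per machine and, per channel, a multiset buffer
of messages (represented by occurrence counts). -/
def Config (S : CSystem P M) : Type := (∀ A, S.St A) × (P → P → M → ℕ)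

def initConfig (S : CSystem P M) : Config S := ⟨fun A => (S.mach A).init, fun _ _ _ => 0⟩

/-- Asynchronous semantics: outputs add a message to the buffer of the channel,
inputs consume an available message. -/
def Step [DecidableEq P] [DecidableEq M] (S : CSystem P M) (c : Config S) (l : Label P M)
    (c' : Config S) : Prop :=
  (l.isOut = true ∧ (S.mach l.sndr).tr (c.1 l.sndr) l (c'.1 l.sndr) ∧
    (∀ C, C ≠ l.sndr → c'.1 C = c.1 C) ∧
    ∀ A B m, c'.2 A B m =
      if A = l.sndr ∧ B = l.rcvr ∧ m = l.msg then c.2 A B m + 1 else c.2 A B m) ∨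
  (l.isOut = false ∧ (S.mach l.rcvr).tr (c.1 l.rcvr) l (c'.1 l.rcvr) ∧
    (∀ C, C ≠ l.rcvr → c'.1 C = c.1 C) ∧ 0 < c.2 l.sndr l.rcvr l.msg ∧
    ∀ A B m, c'.2 A B m =
      if A = l.sndr ∧ B = l.rcvr ∧ m = l.msg then c.2 A B m - 1 else c.2 A B m)

/-- Labelled runs of a communicating system. -/
inductive Run [DecidableEq P] [DecidableEq M] (S : CSystem P M) :
    Config S → List (Label P M) → Config S → Prop
  | nil (c : Config S) : Run S c [] c
  | cons {c c' c'' : Config S} {l : Label P M} {w : List (Label P M)} :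
      Step S c l c' → Run S c' w c'' → Run S c (l :: w) c''

/-- Accepting configuration: all machines in accepting states, all buffers empty. -/
def Accepting (S : CSystem P M) (c : Config S) : Prop :=
  (∀ A, (S.mach A).acc (c.1 A)) ∧ ∀ A B m, c.2 A B m = 0

/-- The language of a communicating system. -/
def sysLang [DecidableEq P] [DecidableEq M] (S : CSystem P M) : Set (List (Label P M)) :=
  {w | ∃ c, Run S (initConfig S) w c ∧ Accepting S c}

/-- Deadlock freedom: from every reachable configuration an accepting one is reachable. -/
def DeadlockFree [DecidableEq P] [DecidableEq M] (S : CSystem P M) : Prop :=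
  ∀ w c, Run S (initConfig S) w c → ∃ w' c', Run S c w' c' ∧ Accepting S c'

/-- `A` is termination-unaware in `S`: some reachable accepting configuration has an
input transition departing from `A`'s local state. -/
def TermUnawareSys [DecidableEq P] [DecidableEq M] (S : CSystem P M) (A : P) : Prop :=
  ∃ w c, Run S (initConfig S) w c ∧ Accepting S c ∧
    ∃ l q', (S.mach A).tr (c.1 A) l q' ∧ l.isOut = false

def WeaklyRealisable [DecidableEq P] [DecidableEq M] (L : Set (List (Label P M))) : Prop :=
  ∃ S : CSystem P M, L = sysLang S

def SafelyRealisable [DecidableEq P] [DecidableEq M] (L : Set (List (Label P M))) : Prop :=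
  ∃ S : CSystem P M, L = sysLang S ∧ DeadlockFree S

/-- `L` is termination-sound for `P'`: safely realisable by a system in which
`P'` is termination-aware. -/
def TermSound [DecidableEq P] [DecidableEq M] (L : Set (List (Label P M))) (P' : Set P) : Prop :=
  ∃ S : CSystem P M, L = sysLang S ∧ DeadlockFree S ∧ ∀ A ∈ P', ¬ TermUnawareSys S A

/-- `A` is termination-unaware for the language `L`: some `W, W' ∈ L` with
`W↾A` a proper prefix of `W'↾A` whose next letter is an input. -/
def TermUnawareLang [DecidableEq P] {M : Type} (L : Set (List (Label P M))) (A : P) : Prop :=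
  ∃ W ∈ L, ∃ W' ∈ L, ∃ l rest, wproj W' A = wproj W A ++ l :: rest ∧ l.isOut = false

/-- The relation `φ(≤_{r↾A}) ∪ ≤_{r'↾A}` used in the pomset-level termination condition. -/
def combRel {L : Type} (pA pA' : Lposet E L) (φ : E → E) : E → E → Prop := fun x y =>
  (x ∈ pA'.events ∧ y ∈ pA'.events ∧ pA'.le x y) ∨
    ∃ a ∈ pA.events, ∃ b ∈ pA.events, φ a = x ∧ φ b = y ∧ pA.le a b

/-- `A` is termination-unaware for the set of pomsets `R`. -/
def TermUnawarePom (R : Set (Lposet E (Label P M))) (A : P) : Prop :=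
  ∃ r ∈ R, ∃ r' ∈ R, ∃ φ : E → E,
    Set.InjOn φ ↑(projP r A).events ∧
    Set.MapsTo φ ↑(projP r A).events ↑(projP r' A).events ∧
    (∀ e ∈ (projP r A).events, (projP r' A).lab (φ e) = (projP r A).lab e) ∧
    -- `φ(≤_{r↾A}) ∪ ≤_{r'↾A}` is a partial order on the events of `r'↾A`
    (∀ x ∈ (projP r' A).events, ∀ y ∈ (projP r' A).events, ∀ z ∈ (projP r' A).events,
      combRel (projP r A) (projP r' A) φ x y → combRel (projP r A) (projP r' A) φ y z →
        combRel (projP r A) (projP r' A) φ x z) ∧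
    (∀ x ∈ (projP r' A).events, ∀ y ∈ (projP r' A).events,
      combRel (projP r A) (projP r' A) φ x y → combRel (projP r A) (projP r' A) φ y x →
        x = y) ∧
    -- every minimal element of the combined order is the image of a minimal element
    (∀ x ∈ (projP r' A).events,
      (∀ y ∈ (projP r' A).events, combRel (projP r A) (projP r' A) φ y x → y = x) →
        ∃ a ∈ (projP r A).events,
          (∀ b ∈ (projP r A).events, (projP r A).le b a → b = a) ∧ φ a = x) ∧
    -- some minimal element outside the image of `φ` is an input
    ∃ x ∈ (projP r' A).events, x ∉ φ '' ↑(projP r A).events ∧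
      (∀ y ∈ (projP r' A).events, y ∉ φ '' ↑(projP r A).events →
        combRel (projP r A) (projP r' A) φ y x → y = x) ∧
      ((projP r' A).lab x).isOut = false


open Classical in
/-- Membership in the events of a restriction. -/
lemma mem_restrict_events {E L : Type} (r : Lposet E L) (q : E → Prop) (e : E) :
    e ∈ (r.restrict q).events ↔ e ∈ r.events ∧ q e := by
  simp [Lposet.restrict]

/-- Any nonempty finite subset of the events of an lposet has a minimal element. -/
lemma exists_min_aux {E L : Type} (r : Lposet E L) (s : Finset E) (hs : s.Nonempty)
    (hsub : ∀ e ∈ s, e ∈ r.events) :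
    ∃ e ∈ s, ∀ x ∈ s, r.le x e → x = e := by
  classical
  obtain ⟨e, he, hmin⟩ := Finset.exists_min_image s
    (fun x => (s.filter (fun y => r.le y x)).card) hs
  refine ⟨e, he, fun x hx hle => ?_⟩
  by_contra hne
  have hss : s.filter (fun y => r.le y x) ⊆ s.filter (fun y => r.le y e) := by
    intro z hz
    simp only [Finset.mem_filter] at hz ⊢
    exact ⟨hz.1, r.le_trans z (hsub z hz.1) x (hsub x hx) e (hsub e he) hz.2 hle⟩
  have hlt : s.filter (fun y => r.le y x) ⊂ s.filter (fun y => r.le y e) := by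
    rw [Finset.ssubset_iff_of_subset hss]
    refine ⟨e, ?_, ?_⟩
    · simp only [Finset.mem_filter]
      exact ⟨he, r.le_refl e (hsub e he)⟩
    · simp only [Finset.mem_filter, not_and]
      intro _ hex
      exact hne (r.le_antisymm x (hsub x hx) e (hsub e he) hle hex)
  have h1 := Finset.card_lt_card hlt
  have h2 := hmin x hx
  omega

open Classical in
/-- A downward-closed, order-consistent nodup list of events extends to a
linearization of the whole lposet. -/
lemma extend_lin {E L : Type} (r : Lposet E L) :
    ∀ (n : ℕ) (p : List E), (r.events.filter (fun e => e ∉ p)).card = n →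
    p.Nodup → (∀ e ∈ p, e ∈ r.events) →
    (∀ x ∈ r.events, ∀ y ∈ p, r.le x y → x ∈ p) →
    (∀ i j : Fin p.length, r.le (p.get i) (p.get j) → (i : ℕ) ≤ (j : ℕ)) →
    ∃ es, p <+: es ∧ IsLinWith r es (es.map r.lab) := by
  classical
  intro n
  induction n with
  | zero =>
    intro p hcard hnd hsub hdc hord
    refine ⟨p, List.prefix_refl p, hnd, fun e => ⟨fun h => hsub e h, fun h => ?_⟩, hord, rfl⟩
    by_contra hne
    have hmem : e ∈ r.events.filter (fun e => e ∉ p) := Finset.mem_filter.2 ⟨h, hne⟩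
    rw [Finset.card_eq_zero.1 hcard] at hmem
    exact absurd hmem (Finset.notMem_empty e)
  | succ n ih =>
    intro p hcard hnd hsub hdc hord
    have hsne : (r.events.filter (fun e => e ∉ p)).Nonempty := by
      rw [← Finset.card_pos, hcard]; omega
    obtain ⟨e, he, hemin⟩ := exists_min_aux r _ hsne
      (fun x hx => Finset.mem_of_mem_filter x hx)
    have heE : e ∈ r.events := Finset.mem_of_mem_filter e he
    have henp : e ∉ p := (Finset.mem_filter.1 he).2
    -- new list
    set p' := p ++ [e] with hp'
    have hnd' : p'.Nodup := by
      simp only [hp', List.nodup_append, List.nodup_cons, List.nodup_nil,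
        List.disjoint_singleton]
      exact ⟨hnd, by simp, by intro a ha b hb; simp at hb; subst hb; rintro rfl; exact henp ha⟩
    have hsub' : ∀ x ∈ p', x ∈ r.events := by
      intro x hx
      rcases List.mem_append.1 hx with h | h
      · exact hsub x h
      · simp only [List.mem_singleton] at h; subst h; exact heE
    have hdc' : ∀ x ∈ r.events, ∀ y ∈ p', r.le x y → x ∈ p' := by
      intro x hx y hy hle
      rcases List.mem_append.1 hy with h | h
      · exact List.mem_append.2 (Or.inl (hdc x hx y h hle))
      · simp only [List.mem_singleton] at h
        rw [h] at hle
        by_cases hxp : x ∈ p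
        · exact List.mem_append.2 (Or.inl hxp)
        · have hxe : x = e := hemin x (Finset.mem_filter.2 ⟨hx, hxp⟩) hle
          exact List.mem_append.2 (Or.inr (by simp [hxe]))
    have hord' : ∀ i j : Fin p'.length, r.le (p'.get i) (p'.get j) → (i : ℕ) ≤ (j : ℕ) := by
      intro i j hle
      have hip : (i : ℕ) < p.length + 1 := by
        simpa [hp'] using i.2
      have hjp : (j : ℕ) < p.length + 1 := by
        simpa [hp'] using j.2
      rcases Nat.lt_or_ge (i : ℕ) p.length with hi | hi
      · rcases Nat.lt_or_ge (j : ℕ) p.length with hj | hj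
        · have hgi : p'.get i = p.get ⟨i, hi⟩ := by
            simp only [List.get_eq_getElem, hp']
            exact List.getElem_append_left hi
          have hgj : p'.get j = p.get ⟨j, hj⟩ := by
            simp only [List.get_eq_getElem, hp']
            exact List.getElem_append_left hj
          exact hord ⟨i, hi⟩ ⟨j, hj⟩ (by rwa [hgi, hgj] at hle)
        · omega
      · have hie : (i : ℕ) = p.length := by omega
        have hgi : p'.get i = e := by
          simp only [List.get_eq_getElem, hp']
          exact List.getElem_concat_length hie _
        rcases Nat.lt_or_ge (j : ℕ) p.length with hj | hj
        · have hgj : p'.get j = p.get ⟨j, hj⟩ := by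
            simp only [List.get_eq_getElem, hp']
            exact List.getElem_append_left hj
          rw [hgi, hgj] at hle
          exact absurd (hdc e heE _ (List.get_mem p _) hle) henp
        · omega
    have hcard' : (r.events.filter (fun x => x ∉ p')).card = n := by
      have hset : r.events.filter (fun x => x ∉ p') =
          (r.events.filter (fun x => x ∉ p)).erase e := by
        ext x
        simp only [Finset.mem_filter, Finset.mem_erase, hp', List.mem_append,
          List.mem_singleton]
        tauto
      rw [hset, Finset.card_erase_of_mem he, hcard]
      omega
    obtain ⟨es, hpre, hlin⟩ := ih p' hcard' hnd' hsub' hdc' hord'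
    exact ⟨es, List.IsPrefix.trans ⟨[e], rfl⟩ hpre, hlin⟩

/-- `W ∈ pref(L(r))` iff `W ∈ L(r')` for some prefix pomset `r'` of `r`. -/
theorem statement_3 {E Λ : Type} (r : Lposet E Λ) (W : List Λ) :
    W ∈ prefCl (lang r) ↔ ∃ (F : Type) (r' : Lposet F Λ), IsPrefixPom r' r ∧ W ∈ lang r' := by
  constructor
  · rintro ⟨W', ⟨es, hnd, hmem, hord, hWes⟩, hpre⟩
    set n := W.length with hn
    set t := es.take n with ht
    -- downward closure of `t`
    have hdc : ∀ x ∈ r.events, ∀ y ∈ t, r.le x y → x ∈ t := by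
      intro x hx y hyt hle
      have hxes : x ∈ es := (hmem x).2 hx
      obtain ⟨i, hi, hix⟩ := List.getElem_of_mem hxes
      obtain ⟨j, hj, hjy⟩ := List.getElem_of_mem hyt
      have hjes : j < es.length := lt_of_lt_of_le hj (by simp [ht])
      have hjy' : es[j] = y := by
        rw [← hjy]; exact (List.getElem_take).symm
      have hij : i ≤ j := by
        refine hord ⟨i, hi⟩ ⟨j, hjes⟩ ?_
        simp only [List.get_eq_getElem, hix, hjy']
        exact hle
      have hit : i < t.length := lt_of_le_of_lt hij hj
      have : t[i]'hit = x := by rw [List.getElem_take]; exact hix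
      exact this ▸ List.getElem_mem hit
    refine ⟨E, r.restrict (fun e => e ∈ t), ⟨id, Set.injOn_id _, ?_, fun e _ => rfl,
      fun x y => ?_⟩, ⟨t, ?_, ?_, ?_, ?_⟩⟩
    · intro e he
      exact ((mem_restrict_events r _ e).1 he).1
    · constructor
      · rintro ⟨a, ha, b, hb, rfl, rfl, hle⟩
        rw [mem_restrict_events] at ha hb
        exact ⟨ha.1, hb.1, hle, b, (mem_restrict_events r _ b).2 hb, rfl⟩
      · rintro ⟨hx, hy, hle, b, hb, rfl⟩
        rw [mem_restrict_events] at hb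
        refine ⟨x, ?_, b, ?_, rfl, rfl, hle⟩
        · exact (mem_restrict_events r _ x).2 ⟨hx, hdc x hx b hb.2 hle⟩
        · exact (mem_restrict_events r _ b).2 hb
    · exact List.Nodup.sublist (List.take_sublist n es) hnd
    · intro e
      rw [mem_restrict_events]
      exact ⟨fun h => ⟨(hmem e).1 (List.mem_of_mem_take h), h⟩, fun h => h.2⟩
    · intro i j hle
      have hil : (i : ℕ) < es.length := lt_of_lt_of_le i.2 (by simp [ht])
      have hjl : (j : ℕ) < es.length := lt_of_lt_of_le j.2 (by simp [ht])
      refine hord ⟨i, hil⟩ ⟨j, hjl⟩ ?_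
      simp only [List.get_eq_getElem] at hle ⊢
      rw [List.getElem_take, List.getElem_take] at hle
      exact hle
    · have hW : W = W'.take n := by
        rw [hn]; exact List.prefix_iff_eq_take.1 hpre
      rw [hW, hWes, ht, List.map_take]
      rfl
  · rintro ⟨F, r', ⟨φ, hinj, hmaps, hlab, hiff⟩, es', hnd', hmem', hord', hW⟩
    set p := es'.map φ with hp
    have hpmem : ∀ x, x ∈ p ↔ ∃ a ∈ r'.events, φ a = x := by
      intro x
      simp only [hp, List.mem_map]
      constructor
      · rintro ⟨a, ha, rfl⟩; exact ⟨a, (hmem' a).1 ha, rfl⟩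
      · rintro ⟨a, ha, rfl⟩; exact ⟨a, (hmem' a).2 ha, rfl⟩
    have pnd : p.Nodup := by
      refine List.Nodup.map_on ?_ hnd'
      intro x hx y hy hxy
      exact hinj ((hmem' x).1 hx) ((hmem' y).1 hy) hxy
    have psub : ∀ x ∈ p, x ∈ r.events := by
      intro x hx
      obtain ⟨a, ha, rfl⟩ := (hpmem x).1 hx
      exact hmaps ha
    have pdc : ∀ x ∈ r.events, ∀ y ∈ p, r.le x y → x ∈ p := by
      intro x hx y hy hle
      obtain ⟨b, hb, rfl⟩ := (hpmem y).1 hy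
      obtain ⟨a, ha, _, _, hax, _, _⟩ := (hiff x (φ b)).2 ⟨hx, hmaps hb, hle, b, hb, rfl⟩
      exact (hpmem x).2 ⟨a, ha, hax⟩
    have pord : ∀ i j : Fin p.length, r.le (p.get i) (p.get j) → (i : ℕ) ≤ (j : ℕ) := by
      intro i j hle
      have hlen : p.length = es'.length := by simp [hp]
      have hi : (i : ℕ) < es'.length := hlen ▸ i.2
      have hj : (j : ℕ) < es'.length := hlen ▸ j.2
      have hgi : p.get i = φ (es'.get ⟨i, hi⟩) := by simp [hp]
      have hgj : p.get j = φ (es'.get ⟨j, hj⟩) := by simp [hp]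
      rw [hgi, hgj] at hle
      have ha : es'.get ⟨i, hi⟩ ∈ r'.events := (hmem' _).1 (List.get_mem es' _)
      have hb : es'.get ⟨j, hj⟩ ∈ r'.events := (hmem' _).1 (List.get_mem es' _)
      obtain ⟨a', ha', b', hb', hax, hbx, hle'⟩ := (hiff _ _).2
        ⟨hmaps ha, hmaps hb, hle, _, hb, rfl⟩
      have h1 : a' = es'.get ⟨i, hi⟩ := hinj ha' ha hax
      have h2 : b' = es'.get ⟨j, hj⟩ := hinj hb' hb hbx
      subst h1; subst h2
      exact hord' ⟨i, hi⟩ ⟨j, hj⟩ hle'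
    obtain ⟨es, hpre, hlin⟩ := extend_lin r _ p rfl pnd psub pdc pord
    have hWp : W = p.map r.lab := by
      rw [hW, hp, List.map_map]
      refine List.map_congr_left ?_
      intro a ha
      exact (hlab a ((hmem' a).1 ha)).symm
    exact ⟨es.map r.lab, ⟨es, hlin⟩, hWp ▸ hpre.map r.lab⟩

end CPom
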